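/- arXiv:2510.09527 — 2 statements merged into one kernel-verified Lean document; each statement's English description precedes it below -/
import Mathlib

section
/- In the inverse semigroup S_{G,U}, for idempotents q_{(α,A)} and q_{(β,B)}, one has q_{(α,A)} ≤ q_{(β,B)} (i.e., their product equals q_{(α,A)}) if and only if either (1) α = β and A ⊆ B, or (2) α = βγ for some path γ of length ≥ 1 with r(γ) ⊆ B. -/
/-- A self-similar ultragraph `(G, U, φ)`: an ultragraph with vertex type `V`,
edge type `E`, (singleton) range map `r`, source map `s`, together with an action of
`G` on vertices and edges by ultragraph automorphisms and a 1-cocycle `φ` satisfying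
`φ(gh,e) = φ(g,h·e)φ(h,e)` and `φ(g,e)·s(e) ⊆ g·s(e)`. -/
structure SSU (G V E : Type*) [Group G] where
  r : E → V
  s : E → Set V
  s_ne : ∀ e, (s e).Nonempty
  actV : G → V → V
  actE : G → E → E
  φ : G → E → G
  actV_one : ∀ v, actV 1 v = v
  actV_mul : ∀ g h v, actV (g * h) v = actV g (actV h v)
  actE_one : ∀ e, actE 1 e = e
  actE_mul : ∀ g h e, actE (g * h) e = actE g (actE h e)
  r_act : ∀ g e, r (actE g e) = actV g (r e)
  s_act : ∀ g e, s (actE g e) = actV g '' s e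
  cocycle : ∀ g h e, φ (g * h) e = φ g (actE h e) * φ h e
  restrict : ∀ g e, actV (φ g e) '' s e ⊆ actV g '' s e

variable {G V E : Type*} [Group G]

/-- The action of `G` on finite paths: `g·(αβ) = (g·α)(φ(g,α)·β)`. -/
def SSU.actPath (U : SSU G V E) : G → List E → List E
  | _, [] => []
  | g, e :: l => U.actE g e :: U.actPath (U.φ g e) l

/-- The cocycle extended to finite paths: `φ(g, αβ) = φ(φ(g,α), β)`. -/
def SSU.cocPath (U : SSU G V E) : G → List E → G
  | g, [] => g
  | g, e :: l => U.cocPath (U.φ g e) l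

/-- A finite path: consecutive edges satisfy `r(e_{i+1}) ⊆ s(e_i)`. -/
def SSU.IsPath (U : SSU G V E) (l : List E) : Prop :=
  l.Chain' (fun e f => U.r f ∈ U.s e)

/-- The source `s(α)` of a path (the source of its last edge; `s(ω) = U⁰`). -/
def SSU.sP (U : SSU G V E) (l : List E) : Set V :=
  match l.getLast? with
  | none => Set.univ
  | some e => U.s e

/-- The range `r(α)` of a path (the singleton range of its first edge; `r(ω) = U⁰`). -/
def SSU.rP (U : SSU G V E) (l : List E) : Set V :=
  match l.head? with
  | none => Set.univ
  | some e => {U.r e}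

open scoped Classical in
/-- The multiplication of the inverse semigroup `S_{G,U}` of a self-similar
ultragraph, on quadruples `(α, A, g, β)` (paths are lists, the empty list being the
zero-length path `ω`); `none` plays the role of the zero element. -/
noncomputable def sguMul (U : SSU G V E) :
    (List E × Set V × G × List E) → (List E × Set V × G × List E) →
      Option (List E × Set V × G × List E) :=
  fun x y =>
    let α := x.1; let A := x.2.1; let g := x.2.2.1; let β := x.2.2.2
    let γ := y.1; let B := y.2.1; let h := y.2.2.1; let δ := y.2.2.2
    if β <+: γ ∧ β ≠ γ then
      -- γ = βε with |ε| ≥ 1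
      let ε := γ.drop β.length
      if U.actV g '' U.rP ε ⊆ A then
        some (α ++ U.actPath g ε,
          (U.actV g '' U.sP ε) ∩ (U.actV (U.cocPath g ε) '' B),
          U.cocPath g ε * h, δ)
      else none
    else if γ <+: β ∧ γ ≠ β then
      -- β = γε with |ε| ≥ 1
      let ε := β.drop γ.length
      if U.rP ε ⊆ B then
        some (α, A ∩ (U.actV (g * (U.cocPath h⁻¹ ε)⁻¹ * h⁻¹) '' U.sP β),
          g * (U.cocPath h⁻¹ ε)⁻¹, δ ++ U.actPath h⁻¹ ε)
      else none
    else if γ = β then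
      if (A ∩ U.actV g '' B).Nonempty then some (α, A ∩ U.actV g '' B, g * h, δ)
      else none
    else none

lemma SSU.phi_one (U : SSU G V E) (e : E) : U.φ 1 e = 1 := by
  have h := U.cocycle 1 1 e
  rw [one_mul, U.actE_one] at h
  have := mul_right_cancel (a := (1 : G)) (b := U.φ 1 e) (c := U.φ 1 e)
  exact (this (by rw [one_mul]; exact h)).symm

lemma SSU.actPath_one (U : SSU G V E) (l : List E) : U.actPath 1 l = l := by
  induction l with
  | nil => rfl
  | cons e l ih => simp [SSU.actPath, U.actE_one, U.phi_one, ih]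

lemma SSU.cocPath_one (U : SSU G V E) (l : List E) : U.cocPath 1 l = 1 := by
  induction l with
  | nil => rfl
  | cons e l ih => simp [SSU.cocPath, U.phi_one, ih]

lemma SSU.actV_one_image (U : SSU G V E) (S : Set V) : U.actV 1 '' S = S := by
  rw [show U.actV 1 = id from funext U.actV_one, Set.image_id]

/-- In `S_{G,U}`, for idempotents `q_{(α,A)} = (α,A,1,α)` and `q_{(β,B)} = (β,B,1,β)`,
one has `q_{(α,A)} ≤ q_{(β,B)}` (their product equals `q_{(α,A)}`) iff either
`α = β` and `A ⊆ B`, or `α = βγ` for some path `γ` of length `≥ 1` with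
`r(γ) ⊆ B`. -/
theorem sgu_idempotent_le_iff (U : SSU G V E) (α β : List E) (A B : Set V)
    (hpα : U.IsPath α) (hpβ : U.IsPath β)
    (hA : A.Nonempty) (hAs : A ⊆ U.sP α)
    (hB : B.Nonempty) (hBs : B ⊆ U.sP β) :
    sguMul U (α, A, 1, α) (β, B, 1, β) = some (α, A, 1, α) ↔
      ((α = β ∧ A ⊆ B) ∨ ∃ γ : List E, γ ≠ [] ∧ α = β ++ γ ∧ U.rP γ ⊆ B)  := by
  unfold sguMul
  simp only
  split_ifs with h1 h2 h3 h4 h5 h6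
  · -- α proper prefix of β: LHS false (4th comp β ≠ α), RHS false
    constructor
    · intro h
      exfalso
      have := (Option.some.injEq _ _).mp h
      exact h1.2 (congrArg (fun p => p.2.2.2) this).symm
    · rintro (⟨rfl, -⟩ | ⟨γ, hγ, hαβ, -⟩)
      · exact absurd rfl h1.2
      · have hl := h1.1.length_le
        rw [hαβ, List.length_append] at hl
        have : γ.length ≠ 0 := fun h => hγ (List.length_eq_zero_iff.mp h)
        omega
  · constructor
    · intro h; exact absurd h (by simp)
    · rintro (⟨rfl, -⟩ | ⟨γ, hγ, hαβ, -⟩)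
      · exact absurd rfl h1.2
      · have hl := h1.1.length_le
        rw [hαβ, List.length_append] at hl
        have : γ.length ≠ 0 := fun h => hγ (List.length_eq_zero_iff.mp h)
        omega
  · -- β proper prefix of α, rP ε ⊆ B: both sides true
    have hεne : α.drop β.length ≠ [] := by
      intro h
      have := h3.1.eq_of_length_le
      have hl : β.length = α.length := by
        have := h3.1.length_le
        have h2' : (α.drop β.length).length = α.length - β.length := List.length_drop
        rw [h] at h2'; simp at h2'; omega
      exact h3.2 (h3.1.eq_of_length_le hl.ge)
    have happ : β ++ α.drop β.length = α := List.prefix_iff_eq_append.mp h3.1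
    constructor
    · intro _
      exact Or.inr ⟨α.drop β.length, hεne, happ.symm, h4⟩
    · intro _
      simp only [inv_one, U.cocPath_one, U.actPath_one, inv_one, one_mul, mul_one,
        U.actV_one_image, happ, Set.inter_eq_left.mpr hAs]
  · -- β proper prefix of α, ¬(rP ε ⊆ B): both sides false
    constructor
    · intro h; exact absurd h (by simp)
    · rintro (⟨rfl, -⟩ | ⟨γ, hγ, hαβ, hrB⟩)
      · exact absurd rfl h3.2
      · refine absurd ?_ h4
        have : α.drop β.length = γ := by rw [hαβ, List.drop_left]
        rw [this]; exact hrB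
  · -- β = α, A ∩ B nonempty
    rw [U.actV_one_image] at h6 ⊢
    constructor
    · intro h
      have := (Option.some.injEq _ _).mp h
      have hAB : A ∩ B = A := congrArg (fun p => p.2.1) this
      exact Or.inl ⟨h5.symm, Set.inter_eq_left.mp hAB⟩
    · rintro (⟨rfl, hAB⟩ | ⟨γ, hγ, hαβ, -⟩)
      · rw [Set.inter_eq_left.mpr hAB, one_mul, h5]
      · exfalso
        have : α.length = β.length + γ.length := by rw [hαβ, List.length_append]
        have : γ.length ≠ 0 := fun h => hγ (List.length_eq_zero_iff.mp h)
        rw [h5] at *; omega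
  · -- β = α, A ∩ B empty
    rw [U.actV_one_image] at h6
    constructor
    · intro h; exact absurd h (by simp)
    · rintro (⟨rfl, hAB⟩ | ⟨γ, hγ, hαβ, -⟩)
      · exact h6 (by rwa [Set.inter_eq_left.mpr hAB])
      · have : α.length = β.length + γ.length := by rw [hαβ, List.length_append]
        have : γ.length ≠ 0 := fun h => hγ (List.length_eq_zero_iff.mp h)
        rw [h5] at *; omega
  · -- incomparable
    constructor
    · intro h; exact absurd h (by simp)
    · rintro (⟨rfl, -⟩ | ⟨γ, hγ, hαβ, -⟩)
      · exact h5 rfl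
      · refine h3 ⟨⟨γ, hαβ.symm⟩, fun h => hγ ?_⟩
        rw [h] at hαβ
        have hl : α.length = α.length + γ.length := by
          conv_lhs => rw [hαβ]
          rw [List.length_append]
        exact List.length_eq_zero_iff.mp (by omega)
end

section
/- Let (G, U, φ) be a self-similar ultragraph and s = (α, A, g, β) ∈ S_{G,U} with |α| > |β|. If θ_s fixes a tight filter F_{βx} for some infinite path x, then α = βγ for some γ ∈ U^{≥1}, the pair (g, γ) is a G-cycle (g·r(γ) ⊆ s(γ)), and x = γ(g·x). -/
variable {G V E : Type*} [Group G]

/-- The sequence of group elements carried along when `g` acts on the infinite path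
`x = x₀x₁x₂⋯`: `g₀ = g`, `g_{k+1} = φ(g_k, x_k)`, so `g_k = φ(g, x₀⋯x_{k-1})`. -/
def SSU.gSeq (U : SSU G V E) (g : G) (x : ℕ → E) : ℕ → G
  | 0 => g
  | k + 1 => U.φ (U.gSeq g x k) (x k)

/-- The action of `g ∈ G` on an infinite path `x`:
`g·x = (g·x₀)(φ(g,x₀)·x₁)(φ(g,x₀x₁)·x₂)⋯`. -/
def SSU.actStream (U : SSU G V E) (g : G) (x : ℕ → E) : ℕ → E :=
  fun k => U.actE (U.gSeq g x k) (x k)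

/-- The concatenation `αx` of a finite path `α` with an infinite path `x`. -/
def appendStream (l : List E) (x : ℕ → E) : ℕ → E :=
  fun k => if h : k < l.length then l.get ⟨k, h⟩ else x (k - l.length)

/-- Let `s = (α, A, g, β) ∈ S_{G,U}` with `|α| > |β|`. If `θ_s` fixes a tight filter
`F_{βx}` for some infinite path `x` — i.e. (since `θ_s(F_{βx}) = F_{α(g·x)}` and
distinct infinite paths give distinct tight filters) `βx = α(g·x)` — then `α = βγ`
for some path `γ` of length `≥ 1`, the pair `(g, γ)` is a `G`-cycle
(`g·r(γ) ⊆ s(γ)`), and `x = γ(g·x)`. -/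
theorem theta_fixed_point_longer (U : SSU G V E) (g : G)
    (α β : List E) (A : Set V) (x : ℕ → E)
    (hlen : β.length < α.length)
    (hpα : U.IsPath α) (hpβ : U.IsPath β)
    (hx : ∀ k, U.r (x (k + 1)) ∈ U.s (x k))
    (hA : A.Nonempty) (hAs : A ⊆ U.sP α ∩ U.actV g '' U.sP β)
    (hdom : U.r (x 0) ∈ U.actV g⁻¹ '' A)
    (hfix : appendStream β x = appendStream α (U.actStream g x)) :
    ∃ γ : List E, γ ≠ [] ∧ α = β ++ γ ∧
      (U.actV g '' U.rP γ ⊆ U.sP γ) ∧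
      x = appendStream γ (U.actStream g x) := by
  set n := β.length with hn
  set m := α.length with hm
  set γ := α.drop n with hγ
  have hγlen : γ.length = m - n := by simp [hγ, hm]
  have hγne : γ ≠ [] := by
    intro h
    have := hγlen
    rw [h] at this
    simp at this
    omega
  -- middle equation : x k = α.get (n+k) for n+k < m
  have hmid : ∀ k (h : n + k < m), x k = α.get ⟨n + k, h⟩ := by
    intro k h
    have h' := congrFun hfix (n + k)
    simp only [appendStream] at h'
    rw [dif_neg (by omega), dif_pos (by omega : n + k < α.length)] at h'
    simpa [← hn] using h'
  have hsplit : α = β ++ γ := by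
    have hβ : β = α.take n := by
      apply List.ext_get
      · simp; omega
      · intro i h1 h2
        have h' := congrFun hfix i
        simp only [appendStream] at h'
        rw [dif_pos (by omega : i < β.length), dif_pos (by omega : i < α.length)] at h'
        simpa using h'
    conv_lhs => rw [← List.take_append_drop n α]
    rw [← hβ, ← hγ]
  refine ⟨γ, hγne, hsplit, ?_, ?_⟩
  · -- G-cycle condition
    have hhead : γ.head? = some (α.get ⟨n, by omega⟩) := by
      rw [hγ, List.head?_drop]
      simp [List.getElem?_eq_getElem (by omega : n < α.length)]
    have hx0 : x 0 = α.get ⟨n, by omega⟩ := by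
      have := hmid 0 (by omega)
      simpa using this
    have hrP : U.rP γ = {U.r (x 0)} := by
      rw [SSU.rP, hhead, hx0]
    have hlast : γ.getLast? = α.getLast? := by
      rw [hsplit, List.getLast?_append_of_ne_nil β hγne]
    have hsP : U.sP γ = U.sP α := by
      rw [SSU.sP, SSU.sP, hlast]
    rw [hrP, hsP]
    obtain ⟨a, haA, haEq⟩ := hdom
    have : U.actV g (U.r (x 0)) = a := by
      rw [← haEq, ← U.actV_mul, mul_inv_cancel, U.actV_one]
    intro y hy
    simp only [Set.image_singleton, Set.mem_singleton_iff] at hy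
    rw [hy, this]
    exact (hAs haA).1
  · funext k
    by_cases h : k < γ.length
    · rw [appendStream, dif_pos h]
      have hk : n + k < m := by omega
      have := hmid k hk
      rw [this]
      simp [hγ, List.getElem_drop]
    · rw [appendStream, dif_neg h]
      have h' := congrFun hfix (n + k)
      simp only [appendStream] at h'
      rw [dif_neg (by omega), dif_neg (by omega)] at h'
      have e1 : n + k - n = k := by omega
      have e2 : n + k - m = k - γ.length := by omega
      rw [e1, e2] at h'
      exact h'
end
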